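/- Let f(r) > 0 and b_γ with 1 − f(r)b_γ²/r² > 0 at all radii along the ray. If dφ/dr = b_γ/(r²√(1 − f(r)b_γ²/r²)) along the projected null geodesic, then substituting φ'(r) into the geodesic-curvature element k_g ds = (r/√f)·(φ'' + (2/r)φ' + (f'/(2f))φ' + f r (φ')³)/((1/f) + r²(φ')²) dr yields k_g ds = (f'(r)/(2r))·b_γ dr/√(f(r)(1 − f(r)b_γ²/r²)). In particular k_g ds vanishes when f' ≡ 0 or b_γ = 0. -/

import Mathlib

/-- Geodesic-curvature element along the projected null ray: substituting
`φ'(r) = b_γ/(r²√(1 − f b_γ²/r²))` into the general geodesic-curvature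
formula yields `k_g ds = (f'/(2r)) b_γ dr / √(f(1 − f b_γ²/r²))`. -/
theorem null_ray_geodesic_curvature
    (f : ℝ → ℝ) (bγ r : ℝ)
    (hf2 : ContDiff ℝ 2 f)
    (hr : 0 < r) (hfr : 0 < f r)
    (hdom : ∀ s : ℝ, 0 < s → 0 < 1 - f s * bγ ^ 2 / s ^ 2)
    (φ' : ℝ → ℝ)
    (hφ' : φ' = fun s => bγ / (s ^ 2 * Real.sqrt (1 - f s * bγ ^ 2 / s ^ 2))) :
    (r / Real.sqrt (f r)) *
      ((deriv φ' r + (2 / r) * φ' r + (deriv f r / (2 * f r)) * φ' r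
          + f r * r * (φ' r) ^ 3) /
        ((1 / f r) + r ^ 2 * (φ' r) ^ 2))
    = (deriv f r / (2 * r)) * bγ /
        Real.sqrt (f r * (1 - f r * bγ ^ 2 / r ^ 2)) ∧
    ((deriv f r = 0 ∨ bγ = 0) →
      (deriv f r / (2 * r)) * bγ /
        Real.sqrt (f r * (1 - f r * bγ ^ 2 / r ^ 2)) = 0) := by
  have hA : 0 < 1 - f r * bγ ^ 2 / r ^ 2 := hdom r hr
  set g' := deriv f r with hg'
  set sA := Real.sqrt (1 - f r * bγ ^ 2 / r ^ 2) with hsA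
  set sg := Real.sqrt (f r) with hsg
  have hsApos : 0 < sA := Real.sqrt_pos.mpr hA
  have hsgpos : 0 < sg := Real.sqrt_pos.mpr hfr
  have hsA2 : sA ^ 2 = 1 - f r * bγ ^ 2 / r ^ 2 := Real.sq_sqrt hA.le
  have hsg2 : sg ^ 2 = f r := Real.sq_sqrt hfr.le
  have hsqrtmul : Real.sqrt (f r * (1 - f r * bγ ^ 2 / r ^ 2)) = sg * sA :=
    Real.sqrt_mul hfr.le _
  -- derivative of f at r
  have hdf : HasDerivAt f g' r :=
    ((hf2.differentiable (by norm_num)) r).hasDerivAt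
  -- derivative of A
  have hA' : HasDerivAt (fun s => 1 - f s * bγ ^ 2 / s ^ 2)
      (-((g' * bγ ^ 2 * r ^ 2 - f r * bγ ^ 2 * (2 * r)) / (r ^ 2) ^ 2)) r := by
    have h1 : HasDerivAt (fun s => f s * bγ ^ 2) (g' * bγ ^ 2) r :=
      hdf.mul_const _
    have h2 : HasDerivAt (fun s : ℝ => s ^ 2) (2 * r) r := by
      simpa using (hasDerivAt_pow 2 r)
    have h3 := h1.div h2 (by positivity)
    have h4 := (hasDerivAt_const r (1 : ℝ)).sub h3
    simp only [zero_sub] at h4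
    exact h4
  have hsA' : HasDerivAt (fun s => Real.sqrt (1 - f s * bγ ^ 2 / s ^ 2))
      (-((g' * bγ ^ 2 * r ^ 2 - f r * bγ ^ 2 * (2 * r)) / (r ^ 2) ^ 2) / (2 * sA)) r :=
    hA'.sqrt hA.ne'
  have hden : HasDerivAt (fun s => s ^ 2 * Real.sqrt (1 - f s * bγ ^ 2 / s ^ 2))
      (2 * r * sA + r ^ 2 *
        (-((g' * bγ ^ 2 * r ^ 2 - f r * bγ ^ 2 * (2 * r)) / (r ^ 2) ^ 2) / (2 * sA))) r := by
    have h2 : HasDerivAt (fun s : ℝ => s ^ 2) (2 * r) r := by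
      simpa using (hasDerivAt_pow 2 r)
    exact h2.mul hsA'
  have hdenne : r ^ 2 * sA ≠ 0 := by positivity
  have hφd : HasDerivAt φ'
      ((0 * (r ^ 2 * sA) - bγ * (2 * r * sA + r ^ 2 *
        (-((g' * bγ ^ 2 * r ^ 2 - f r * bγ ^ 2 * (2 * r)) / (r ^ 2) ^ 2) / (2 * sA))))
        / (r ^ 2 * sA) ^ 2) r := by
    rw [hφ']
    exact (hasDerivAt_const r bγ).div hden hdenne
  have hderiv := hφd.deriv
  have hφr : φ' r = bγ / (r ^ 2 * sA) := by rw [hφ']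
  constructor
  · rw [hderiv, hφr, hsqrtmul]
    have hfr' : f r = sg ^ 2 := hsg2.symm
    have hArw : 1 - f r * bγ ^ 2 / r ^ 2 = sA ^ 2 := hsA2.symm
    rw [hfr'] at hArw ⊢
    field_simp
    nlinarith [sq_nonneg sA, sq_nonneg sg, mul_pos hsApos hsgpos, hArw,
      mul_pos hr hsApos, sq_nonneg (sA*sg), hr.ne', hsApos.ne', hsgpos.ne']
  · rintro (h | h) <;> simp [h]
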